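/- Every monotone (nondecreasing or nonincreasing) continuous function f : [0,1] → ℝ satisfies ∫₀¹ |f(x) − f*(x)| dx ≥ 1/3, where f*(x) = 1 for x ∈ (1/3, 2/3) and f*(x) = 0 otherwise. The proof splits on c := f(2/3): if c ≤ 0 the error on [1/3,2/3] is at least 1/3; if c ≥ 1 the error on [2/3,1] is at least 1/3; if 0 < c < 1 the combined error on [1/3,2/3] ∪ [2/3,1] is at least (1−c)/3 + c/3 = 1/3. -/

import Mathlib

open MeasureTheory

lemma stmt6_key (g : ℝ → ℝ) (hg : IntervalIntegrable g volume 0 1) {a b c : ℝ}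
    (h0 : 0 ≤ a) (hab : a ≤ b) (hb1 : b ≤ 1)
    (hge : ∀ x ∈ Set.Ioo a b, c ≤ g x) :
    c * (b - a) ≤ ∫ x in a..b, g x := by
  have hgi : IntervalIntegrable g volume a b := by
    apply hg.mono_set
    rw [Set.uIcc_of_le hab, Set.uIcc_of_le (by linarith : (0:ℝ) ≤ 1)]
    exact Set.Icc_subset_Icc h0 hb1
  have hio : IntegrableOn g (Set.Ioo a b) volume :=
    ((intervalIntegrable_iff_integrableOn_Ioc_of_le hab).mp hgi).mono_set
      Set.Ioo_subset_Ioc_self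
  rw [intervalIntegral.integral_of_le hab, MeasureTheory.integral_Ioc_eq_integral_Ioo]
  have h := MeasureTheory.setIntegral_ge_of_const_le (measurableSet_Ioo (a := a) (b := b))
    (by simp) hge hio
  rwa [Real.volume_real_Ioo_of_le hab, smul_eq_mul, mul_comm] at h

/-- Every continuous function `f : [0,1] → ℝ` that is monotone
(nondecreasing or nonincreasing) on `[0,1]` satisfies
`∫₀¹ |f(x) − f*(x)| dx ≥ 1/3`, where `f*` is the indicator of `(1/3, 2/3)`. -/
theorem stmt6 (f : ℝ → ℝ) (hc : ContinuousOn f (Set.Icc 0 1))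
    (hm : MonotoneOn f (Set.Icc 0 1) ∨ AntitoneOn f (Set.Icc 0 1)) :
    (1 : ℝ) / 3 ≤
      ∫ x in (0:ℝ)..1,
        |f x - (if x ∈ Set.Ioo ((1:ℝ)/3) ((2:ℝ)/3) then 1 else 0)| := by
  set g : ℝ → ℝ := fun x =>
    |f x - (if x ∈ Set.Ioo ((1:ℝ)/3) ((2:ℝ)/3) then 1 else 0)| with hgdef
  have hf : IntervalIntegrable f volume 0 1 := by
    apply ContinuousOn.intervalIntegrable
    rwa [Set.uIcc_of_le (by norm_num : (0:ℝ) ≤ 1)]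
  have hind : IntervalIntegrable
      (fun x => (if x ∈ Set.Ioo ((1:ℝ)/3) ((2:ℝ)/3) then (1:ℝ) else 0)) volume 0 1 := by
    rw [intervalIntegrable_iff_integrableOn_Ioc_of_le (by norm_num : (0:ℝ) ≤ 1)]
    have : (fun x => (if x ∈ Set.Ioo ((1:ℝ)/3) ((2:ℝ)/3) then (1:ℝ) else 0)) =
        Set.indicator (Set.Ioo ((1:ℝ)/3) ((2:ℝ)/3)) (fun _ => (1:ℝ)) := by
      funext x; simp [Set.indicator_apply]
    rw [this]
    exact (MeasureTheory.integrableOn_const (by simp)).indicator measurableSet_Ioo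
  have hg : IntervalIntegrable g volume 0 1 := (hf.sub hind).abs
  have hg13 : IntervalIntegrable g volume 0 (1/3) :=
    hg.mono_set (by rw [Set.uIcc_of_le, Set.uIcc_of_le] <;> first
      | exact Set.Icc_subset_Icc (le_refl _) (by norm_num) | norm_num)
  have hg23 : IntervalIntegrable g volume (1/3) (2/3) :=
    hg.mono_set (by rw [Set.uIcc_of_le, Set.uIcc_of_le] <;> first
      | exact Set.Icc_subset_Icc (by norm_num) (by norm_num) | norm_num)
  have hg31 : IntervalIntegrable g volume (2/3) 1 :=
    hg.mono_set (by rw [Set.uIcc_of_le, Set.uIcc_of_le] <;> first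
      | exact Set.Icc_subset_Icc (by norm_num) (le_refl _) | norm_num)
  have hsplit : (∫ x in (0:ℝ)..1, g x) =
      (∫ x in (0:ℝ)..(1/3), g x) + (∫ x in (1/3:ℝ)..(2/3), g x)
        + (∫ x in (2/3:ℝ)..1, g x) := by
    rw [intervalIntegral.integral_add_adjacent_intervals hg13 hg23,
      intervalIntegral.integral_add_adjacent_intervals (hg13.trans hg23) hg31]
  show (1:ℝ)/3 ≤ ∫ x in (0:ℝ)..1, g x
  rw [hsplit]
  rcases hm with hmono | hanti
  · set c := f (2/3) with hcdef
    have h2 : (1 - c) * ((2:ℝ)/3 - 1/3) ≤ ∫ x in (1/3:ℝ)..(2/3), g x := by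
      apply stmt6_key g hg (by norm_num) (by norm_num) (by norm_num)
      intro x hx
      have hfx : f x ≤ c := hmono ⟨by linarith [hx.1], by linarith [hx.2]⟩
        (by constructor <;> norm_num) (le_of_lt hx.2)
      simp only [hgdef, if_pos hx]
      calc 1 - c ≤ 1 - f x := by linarith
        _ ≤ |f x - 1| := by rw [abs_sub_comm]; exact le_abs_self _
    have h3 : c * ((1:ℝ) - 2/3) ≤ ∫ x in (2/3:ℝ)..1, g x := by
      apply stmt6_key g hg (by norm_num) (by norm_num) (le_refl _)
      intro x hx
      have hfx : c ≤ f x := hmono (by constructor <;> norm_num)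
        ⟨by linarith [hx.1], le_of_lt hx.2⟩ (le_of_lt hx.1)
      have hne : x ∉ Set.Ioo ((1:ℝ)/3) ((2:ℝ)/3) := by
        intro h; exact absurd h.2 (not_lt.mpr (le_of_lt hx.1))
      simp only [hgdef, if_neg hne, sub_zero]
      exact le_trans hfx (le_abs_self _)
    have h1 : (0:ℝ) * ((1:ℝ)/3 - 0) ≤ ∫ x in (0:ℝ)..(1/3), g x := by
      apply stmt6_key g hg (le_refl _) (by norm_num) (by norm_num)
      intro x _; exact abs_nonneg _
    linarith
  · set c := f (1/3) with hcdef
    have h2 : (1 - c) * ((2:ℝ)/3 - 1/3) ≤ ∫ x in (1/3:ℝ)..(2/3), g x := by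
      apply stmt6_key g hg (by norm_num) (by norm_num) (by norm_num)
      intro x hx
      have hfx : f x ≤ c := hanti (by constructor <;> norm_num)
        ⟨by linarith [hx.1], by linarith [hx.2]⟩ (le_of_lt hx.1)
      simp only [hgdef, if_pos hx]
      calc 1 - c ≤ 1 - f x := by linarith
        _ ≤ |f x - 1| := by rw [abs_sub_comm]; exact le_abs_self _
    have h1 : c * ((1:ℝ)/3 - 0) ≤ ∫ x in (0:ℝ)..(1/3), g x := by
      apply stmt6_key g hg (le_refl _) (by norm_num) (by norm_num)
      intro x hx
      have hfx : c ≤ f x := hanti ⟨le_of_lt hx.1, by linarith [hx.2]⟩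
        (by constructor <;> norm_num) (le_of_lt hx.2)
      have hne : x ∉ Set.Ioo ((1:ℝ)/3) ((2:ℝ)/3) := by
        intro h; exact absurd hx.2 (not_lt.mpr (le_of_lt h.1))
      simp only [hgdef, if_neg hne, sub_zero]
      exact le_trans hfx (le_abs_self _)
    have h3 : (0:ℝ) * ((1:ℝ) - 2/3) ≤ ∫ x in (2/3:ℝ)..1, g x := by
      apply stmt6_key g hg (by norm_num) (by norm_num) (le_refl _)
      intro x _; exact abs_nonneg _
    linarith
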